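/- Let S ⊆ {1,…,m} with |S| ≥ 2, let z ∈ ℂ^m, and for u ∈ ℂ with |u| = 1 and u ≠ 1 let z^a ∈ ℂ^m be the attacked vector defined by z^a_i = u·z_i for i ∈ S and z^a_i = z_i for i ∉ S. Then F z^a = F z holds for some such u (equivalently, for every such u) if and only if F^S z^S = 0, i.e., if and only if z^S lies in the null space of F^S. -/

import Mathlib

open Matrix

/-- The verification matrix `F := H (Hᴴ H)⁻¹ Hᴴ - Id`. -/
noncomputable def verif {m n : ℕ} (H : Matrix (Fin m) (Fin n) ℂ) :
    Matrix (Fin m) (Fin m) ℂ :=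
  H * (Hᴴ * H)⁻¹ * Hᴴ - 1

/-- A set `S` of measurement (row) indices is critical if deleting the rows of `H`
with indices in `S` leaves a matrix of rank `< n`. -/
def IsCritical {m n : ℕ} (H : Matrix (Fin m) (Fin n) ℂ) (S : Finset (Fin m)) : Prop :=
  (H.submatrix (fun i : {i : Fin m // i ∉ S} => (i : Fin m)) id).rank < n

/-- `F^S`: the submatrix of `F` formed by the columns with indices in `S`. -/
def colSub {m : ℕ} (F : Matrix (Fin m) (Fin m) ℂ) (S : Finset (Fin m)) :
    Matrix (Fin m) {j : Fin m // j ∈ S} ℂ :=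
  F.submatrix id (fun j => (j : Fin m))

lemma attack_key {m : ℕ} (F : Matrix (Fin m) (Fin m) ℂ) (S : Finset (Fin m))
    (z : Fin m → ℂ) (u : ℂ) (i : Fin m) :
    F.mulVec (fun i => if i ∈ S then u * z i else z i) i =
      F.mulVec z i + (u - 1) * (colSub F S).mulVec (fun j => z j.val) i := by
  simp only [mulVec, dotProduct, colSub, submatrix_apply, id]
  rw [Finset.mul_sum, Finset.sum_coe_sort S (fun j => (u - 1) * (F i j * z j)),
    ← Finset.univ_inter S, ← Finset.sum_ite_mem, ← Finset.sum_add_distrib]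
  apply Finset.sum_congr rfl
  intro x _
  by_cases hx : x ∈ S <;> simp [hx] <;> ring

lemma attack_iff {m : ℕ} (F : Matrix (Fin m) (Fin m) ℂ) (S : Finset (Fin m))
    (z : Fin m → ℂ) (u : ℂ) (hu : u ≠ 1) :
    F.mulVec (fun i => if i ∈ S then u * z i else z i) = F.mulVec z ↔
      (colSub F S).mulVec (fun j => z j.val) = 0 := by
  constructor
  · intro h
    funext i
    have hi := congrFun h i
    rw [attack_key F S z u i] at hi
    have h2 : (u - 1) * (colSub F S).mulVec (fun j => z j.val) i = 0 := by
      linear_combination hi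
    rcases mul_eq_zero.mp h2 with h3 | h3
    · exact absurd (sub_eq_zero.mp h3) hu
    · simpa using h3
  · intro h
    funext i
    rw [attack_key F S z u i, h]
    simp

/-- For a site whose (at least two) phasors have indices in `S`, the residuals are
unchanged under the attack `z^a_i = u·z_i` (`i ∈ S`), for some unit-modulus `u ≠ 1` —
equivalently for every such `u` — iff `z^S` lies in the null space of `F^S`. -/
theorem stmt5 {m n : ℕ} (H : Matrix (Fin m) (Fin n) ℂ) (hH : H.rank = n)
    (S : Finset (Fin m)) (hS : 2 ≤ S.card) (z : Fin m → ℂ) :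
    ((∃ u : ℂ, ‖u‖ = 1 ∧ u ≠ 1 ∧
        (verif H).mulVec (fun i => if i ∈ S then u * z i else z i) =
          (verif H).mulVec z) ↔
      (colSub (verif H) S).mulVec (fun j => z j.val) = 0) ∧
    ((∀ u : ℂ, ‖u‖ = 1 → u ≠ 1 →
        (verif H).mulVec (fun i => if i ∈ S then u * z i else z i) =
          (verif H).mulVec z) ↔
      (colSub (verif H) S).mulVec (fun j => z j.val) = 0) := by
  constructor
  · constructor
    · rintro ⟨u, _, hu1, h⟩
      exact (attack_iff (verif H) S z u hu1).mp h
    · intro h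
      refine ⟨-1, by simp, by norm_num, ?_⟩
      exact (attack_iff (verif H) S z (-1) (by norm_num)).mpr h
  · constructor
    · intro h
      exact (attack_iff (verif H) S z (-1) (by norm_num)).mp
        (h (-1) (by simp) (by norm_num))
    · intro h u _ hu1
      exact (attack_iff (verif H) S z u hu1).mpr h
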